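/- The infinite product G(1/2) = ∏_p (1 + 1/(p(p−1+√(p²−p)))) over all primes p converges to a real number in the interval (1.36, 1.37). -/

import Mathlib

open Real Filter Finset

noncomputable def Fc (n : ℕ) : ℝ :=
  1 + 1 / ((n : ℝ) * ((n : ℝ) - 1 + Real.sqrt ((n : ℝ) ^ 2 - (n : ℝ))))

noncomputable def Ac (n : ℕ) : ℝ :=
  1 / ((n : ℝ) * ((n : ℝ) - 1 + Real.sqrt ((n : ℝ) ^ 2 - (n : ℝ))))

lemma sqrt_lb {n : ℕ} (hn : 2 ≤ n) : (n : ℝ) - 1 ≤ Real.sqrt ((n : ℝ) ^ 2 - n) := by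
  have hx : (2 : ℝ) ≤ n := by exact_mod_cast hn
  exact Real.le_sqrt_of_sq_le (by nlinarith)

lemma denom_lb {n : ℕ} (hn : 2 ≤ n) :
    2 * (n : ℝ) * ((n : ℝ) - 1) ≤ (n : ℝ) * ((n : ℝ) - 1 + Real.sqrt ((n : ℝ) ^ 2 - n)) := by
  have hx : (2 : ℝ) ≤ n := by exact_mod_cast hn
  have h := sqrt_lb hn
  nlinarith

lemma denom_pos {n : ℕ} (hn : 2 ≤ n) :
    0 < (n : ℝ) * ((n : ℝ) - 1 + Real.sqrt ((n : ℝ) ^ 2 - n)) := by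
  have hx : (2 : ℝ) ≤ n := by exact_mod_cast hn
  have h := denom_lb hn
  nlinarith

lemma Ac_pos {n : ℕ} (hn : 2 ≤ n) : 0 < Ac n := by
  have := denom_pos hn; unfold Ac; positivity

lemma Ac_le {n : ℕ} (hn : 2 ≤ n) : Ac n ≤ 1 / (2 * (n : ℝ) * ((n : ℝ) - 1)) := by
  have hx : (2 : ℝ) ≤ n := by exact_mod_cast hn
  exact one_div_le_one_div_of_le (by nlinarith) (denom_lb hn)

lemma Ac_le_sq {n : ℕ} (hn : 2 ≤ n) : Ac n ≤ 1 / (n : ℝ) ^ 2 := by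
  have hx : (2 : ℝ) ≤ n := by exact_mod_cast hn
  refine (Ac_le hn).trans (one_div_le_one_div_of_le (by positivity) (by nlinarith))

lemma one_le_Fc {n : ℕ} (hn : 2 ≤ n) : 1 ≤ Fc n := by
  have := Ac_pos hn
  unfold Fc; unfold Ac at this; linarith

lemma Fc_pos {n : ℕ} (hn : 2 ≤ n) : 0 < Fc n := lt_of_lt_of_le one_pos (one_le_Fc hn)

lemma Fc_nonneg {n : ℕ} (hn : 2 ≤ n) : 0 ≤ Fc n := (Fc_pos hn).le

lemma factor_lb {n : ℕ} (hn : 2 ≤ n) {r : ℝ} (hr : 0 ≤ r) (h : (n : ℝ) ^ 2 - n ≤ r ^ 2) :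
    1 + 1 / ((n : ℝ) * ((n : ℝ) - 1 + r)) ≤ Fc n := by
  have hx : (2 : ℝ) ≤ n := by exact_mod_cast hn
  have hs : Real.sqrt ((n : ℝ) ^ 2 - n) ≤ r := (Real.sqrt_le_left hr).mpr h
  have hd := denom_pos hn
  unfold Fc
  gcongr

lemma factor_ub {n : ℕ} (hn : 2 ≤ n) {r : ℝ} (hr : 1 ≤ r) (h : r ^ 2 ≤ (n : ℝ) ^ 2 - n) :
    Fc n ≤ 1 + 1 / ((n : ℝ) * ((n : ℝ) - 1 + r)) := by
  have hx : (2 : ℝ) ≤ n := by exact_mod_cast hn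
  have hs : r ≤ Real.sqrt ((n : ℝ) ^ 2 - n) := Real.le_sqrt_of_sq_le h
  have hd : (0:ℝ) < (n : ℝ) * ((n : ℝ) - 1 + r) := by nlinarith
  unfold Fc
  gcongr

lemma Fc_lb {n : ℕ} (hn : 2 ≤ n) (r c : ℝ) (hr : 0 ≤ r) (h : (n : ℝ) ^ 2 - n ≤ r ^ 2)
    (hc : c ≤ 1 + 1 / ((n : ℝ) * ((n : ℝ) - 1 + r))) : c ≤ Fc n :=
  hc.trans (factor_lb hn hr h)

lemma Fc_ub {n : ℕ} (hn : 2 ≤ n) (r c : ℝ) (hr : 1 ≤ r) (h : r ^ 2 ≤ (n : ℝ) ^ 2 - n)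
    (hc : 1 + 1 / ((n : ℝ) * ((n : ℝ) - 1 + r)) ≤ c) : Fc n ≤ c :=
  (factor_ub hn hr h).trans hc

def sP : Finset Nat.Primes := (Finset.range 71).subtype Nat.Prime

lemma sP_prod_eq : ∏ p ∈ sP, Fc (p : ℕ) = Fc 2 * (Fc 3 * (Fc 5 * (Fc 7 * (Fc 11 * (Fc 13 * (Fc 17 * (Fc 19 * (Fc 23 * (Fc 29 * (Fc 31 * (Fc 37 * (Fc 41 * (Fc 43 * (Fc 47 * (Fc 53 * (Fc 59 * (Fc 61 * (Fc 67)))))))))))))))))) := by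
  have h1 : ∏ p ∈ sP, Fc (p : ℕ) = ∏ n ∈ (Finset.range 71).filter Nat.Prime, Fc n :=
    Finset.prod_subtype_eq_prod_filter Fc
  have h2 : (Finset.range 71).filter Nat.Prime =
      ({2,3,5,7,11,13,17,19,23,29,31,37,41,43,47,53,59,61,67} : Finset ℕ) := by rfl
  rw [h1, h2]
  repeat rw [Finset.prod_insert (by decide)]
  rw [Finset.prod_singleton]

lemma prod_sP_lb : (1.36 : ℝ) < ∏ p ∈ sP, Fc (p : ℕ) := by
  rw [sP_prod_eq]
  have hl2 : (1.2071067 : ℝ) ≤ Fc 2 := Fc_lb (by norm_num) 1.414214 _ (by norm_num) (by norm_num) (by norm_num)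
  have hl3 : (1.0749149 : ℝ) ≤ Fc 3 := Fc_lb (by norm_num) 2.449490 _ (by norm_num) (by norm_num) (by norm_num)
  have hl5 : (1.0236067 : ℝ) ≤ Fc 5 := Fc_lb (by norm_num) 4.472136 _ (by norm_num) (by norm_num) (by norm_num)
  have hl7 : (1.0114462 : ℝ) ≤ Fc 7 := Fc_lb (by norm_num) 6.480741 _ (by norm_num) (by norm_num) (by norm_num)
  have hl11 : (1.0044371 : ℝ) ≤ Fc 11 := Fc_lb (by norm_num) 10.488089 _ (by norm_num) (by norm_num) (by norm_num)
  have hl13 : (1.0031409 : ℝ) ≤ Fc 13 := Fc_lb (by norm_num) 12.489996 _ (by norm_num) (by norm_num) (by norm_num)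
  have hl17 : (1.0018103 : ℝ) ≤ Fc 17 := Fc_lb (by norm_num) 16.492423 _ (by norm_num) (by norm_num) (by norm_num)
  have hl19 : (1.0014422 : ℝ) ≤ Fc 19 := Fc_lb (by norm_num) 18.493243 _ (by norm_num) (by norm_num) (by norm_num)
  have hl23 : (1.0009771 : ℝ) ≤ Fc 23 := Fc_lb (by norm_num) 22.494444 _ (by norm_num) (by norm_num) (by norm_num)
  have hl29 : (1.0006103 : ℝ) ≤ Fc 29 := Fc_lb (by norm_num) 28.495614 _ (by norm_num) (by norm_num) (by norm_num)
  have hl31 : (1.0005332 : ℝ) ≤ Fc 31 := Fc_lb (by norm_num) 30.495902 _ (by norm_num) (by norm_num) (by norm_num)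
  have hl37 : (1.0003728 : ℝ) ≤ Fc 37 := Fc_lb (by norm_num) 36.496576 _ (by norm_num) (by norm_num) (by norm_num)
  have hl41 : (1.0003029 : ℝ) ≤ Fc 41 := Fc_lb (by norm_num) 40.496914 _ (by norm_num) (by norm_num) (by norm_num)
  have hl43 : (1.0002752 : ℝ) ≤ Fc 43 := Fc_lb (by norm_num) 42.497059 _ (by norm_num) (by norm_num) (by norm_num)
  have hl47 : (1.0002300 : ℝ) ≤ Fc 47 := Fc_lb (by norm_num) 46.497312 _ (by norm_num) (by norm_num) (by norm_num)
  have hl53 : (1.0001805 : ℝ) ≤ Fc 53 := Fc_lb (by norm_num) 52.497619 _ (by norm_num) (by norm_num) (by norm_num)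
  have hl59 : (1.0001454 : ℝ) ≤ Fc 59 := Fc_lb (by norm_num) 58.497864 _ (by norm_num) (by norm_num) (by norm_num)
  have hl61 : (1.0001360 : ℝ) ≤ Fc 61 := Fc_lb (by norm_num) 60.497934 _ (by norm_num) (by norm_num) (by norm_num)
  have hl67 : (1.0001126 : ℝ) ≤ Fc 67 := Fc_lb (by norm_num) 66.498121 _ (by norm_num) (by norm_num) (by norm_num)
  have hc61 := mul_le_mul hl61 hl67 (by positivity) (Fc_nonneg (by norm_num))
  have hc59 := mul_le_mul hl59 hc61 (by positivity) (Fc_nonneg (by norm_num))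
  have hc53 := mul_le_mul hl53 hc59 (by positivity) (Fc_nonneg (by norm_num))
  have hc47 := mul_le_mul hl47 hc53 (by positivity) (Fc_nonneg (by norm_num))
  have hc43 := mul_le_mul hl43 hc47 (by positivity) (Fc_nonneg (by norm_num))
  have hc41 := mul_le_mul hl41 hc43 (by positivity) (Fc_nonneg (by norm_num))
  have hc37 := mul_le_mul hl37 hc41 (by positivity) (Fc_nonneg (by norm_num))
  have hc31 := mul_le_mul hl31 hc37 (by positivity) (Fc_nonneg (by norm_num))
  have hc29 := mul_le_mul hl29 hc31 (by positivity) (Fc_nonneg (by norm_num))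
  have hc23 := mul_le_mul hl23 hc29 (by positivity) (Fc_nonneg (by norm_num))
  have hc19 := mul_le_mul hl19 hc23 (by positivity) (Fc_nonneg (by norm_num))
  have hc17 := mul_le_mul hl17 hc19 (by positivity) (Fc_nonneg (by norm_num))
  have hc13 := mul_le_mul hl13 hc17 (by positivity) (Fc_nonneg (by norm_num))
  have hc11 := mul_le_mul hl11 hc13 (by positivity) (Fc_nonneg (by norm_num))
  have hc7 := mul_le_mul hl7 hc11 (by positivity) (Fc_nonneg (by norm_num))
  have hc5 := mul_le_mul hl5 hc7 (by positivity) (Fc_nonneg (by norm_num))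
  have hc3 := mul_le_mul hl3 hc5 (by positivity) (Fc_nonneg (by norm_num))
  have hc2 := mul_le_mul hl2 hc3 (by positivity) (Fc_nonneg (by norm_num))
  calc (1.36 : ℝ) < (1.2071067 : ℝ) * ((1.0749149 : ℝ) * ((1.0236067 : ℝ) * ((1.0114462 : ℝ) * ((1.0044371 : ℝ) * ((1.0031409 : ℝ) * ((1.0018103 : ℝ) * ((1.0014422 : ℝ) * ((1.0009771 : ℝ) * ((1.0006103 : ℝ) * ((1.0005332 : ℝ) * ((1.0003728 : ℝ) * ((1.0003029 : ℝ) * ((1.0002752 : ℝ) * ((1.0002300 : ℝ) * ((1.0001805 : ℝ) * ((1.0001454 : ℝ) * ((1.0001360 : ℝ) * ((1.0001126 : ℝ))))))))))))))))))) := by norm_num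
    _ ≤ Fc 2 * (Fc 3 * (Fc 5 * (Fc 7 * (Fc 11 * (Fc 13 * (Fc 17 * (Fc 19 * (Fc 23 * (Fc 29 * (Fc 31 * (Fc 37 * (Fc 41 * (Fc 43 * (Fc 47 * (Fc 53 * (Fc 59 * (Fc 61 * (Fc 67)))))))))))))))))) := hc2

lemma prod_sP_ub : ∏ p ∈ sP, Fc (p : ℕ) ≤ (1.3632501 : ℝ) := by
  rw [sP_prod_eq]
  have hu2 : Fc 2 ≤ (1.2071069 : ℝ) := Fc_ub (by norm_num) 1.414213 _ (by norm_num) (by norm_num) (by norm_num)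
  have hu3 : Fc 3 ≤ (1.0749150 : ℝ) := Fc_ub (by norm_num) 2.449489 _ (by norm_num) (by norm_num) (by norm_num)
  have hu5 : Fc 5 ≤ (1.0236069 : ℝ) := Fc_ub (by norm_num) 4.472135 _ (by norm_num) (by norm_num) (by norm_num)
  have hu7 : Fc 7 ≤ (1.0114463 : ℝ) := Fc_ub (by norm_num) 6.480740 _ (by norm_num) (by norm_num) (by norm_num)
  have hu11 : Fc 11 ≤ (1.0044372 : ℝ) := Fc_ub (by norm_num) 10.488088 _ (by norm_num) (by norm_num) (by norm_num)
  have hu13 : Fc 13 ≤ (1.0031411 : ℝ) := Fc_ub (by norm_num) 12.489995 _ (by norm_num) (by norm_num) (by norm_num)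
  have hu17 : Fc 17 ≤ (1.0018104 : ℝ) := Fc_ub (by norm_num) 16.492422 _ (by norm_num) (by norm_num) (by norm_num)
  have hu19 : Fc 19 ≤ (1.0014423 : ℝ) := Fc_ub (by norm_num) 18.493242 _ (by norm_num) (by norm_num) (by norm_num)
  have hu23 : Fc 23 ≤ (1.0009772 : ℝ) := Fc_ub (by norm_num) 22.494443 _ (by norm_num) (by norm_num) (by norm_num)
  have hu29 : Fc 29 ≤ (1.0006104 : ℝ) := Fc_ub (by norm_num) 28.495613 _ (by norm_num) (by norm_num) (by norm_num)
  have hu31 : Fc 31 ≤ (1.0005333 : ℝ) := Fc_ub (by norm_num) 30.495901 _ (by norm_num) (by norm_num) (by norm_num)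
  have hu37 : Fc 37 ≤ (1.0003729 : ℝ) := Fc_ub (by norm_num) 36.496575 _ (by norm_num) (by norm_num) (by norm_num)
  have hu41 : Fc 41 ≤ (1.0003030 : ℝ) := Fc_ub (by norm_num) 40.496913 _ (by norm_num) (by norm_num) (by norm_num)
  have hu43 : Fc 43 ≤ (1.0002753 : ℝ) := Fc_ub (by norm_num) 42.497058 _ (by norm_num) (by norm_num) (by norm_num)
  have hu47 : Fc 47 ≤ (1.0002301 : ℝ) := Fc_ub (by norm_num) 46.497311 _ (by norm_num) (by norm_num) (by norm_num)
  have hu53 : Fc 53 ≤ (1.0001806 : ℝ) := Fc_ub (by norm_num) 52.497618 _ (by norm_num) (by norm_num) (by norm_num)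
  have hu59 : Fc 59 ≤ (1.0001455 : ℝ) := Fc_ub (by norm_num) 58.497863 _ (by norm_num) (by norm_num) (by norm_num)
  have hu61 : Fc 61 ≤ (1.0001361 : ℝ) := Fc_ub (by norm_num) 60.497933 _ (by norm_num) (by norm_num) (by norm_num)
  have hu67 : Fc 67 ≤ (1.0001127 : ℝ) := Fc_ub (by norm_num) 66.498120 _ (by norm_num) (by norm_num) (by norm_num)
  have hc61 := mul_le_mul hu61 hu67 (Fc_nonneg (show 2 ≤ 67 by norm_num)) (by norm_num)
  have hc59 := mul_le_mul hu59 hc61 (mul_nonneg (Fc_nonneg (show 2 ≤ 61 by norm_num)) (Fc_nonneg (show 2 ≤ 67 by norm_num))) (by norm_num)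
  have hc53 := mul_le_mul hu53 hc59 (mul_nonneg (Fc_nonneg (show 2 ≤ 59 by norm_num)) (mul_nonneg (Fc_nonneg (show 2 ≤ 61 by norm_num)) (Fc_nonneg (show 2 ≤ 67 by norm_num)))) (by norm_num)
  have hc47 := mul_le_mul hu47 hc53 (mul_nonneg (Fc_nonneg (show 2 ≤ 53 by norm_num)) (mul_nonneg (Fc_nonneg (show 2 ≤ 59 by norm_num)) (mul_nonneg (Fc_nonneg (show 2 ≤ 61 by norm_num)) (Fc_nonneg (show 2 ≤ 67 by norm_num))))) (by norm_num)
  have hc43 := mul_le_mul hu43 hc47 (mul_nonneg (Fc_nonneg (show 2 ≤ 47 by norm_num)) (mul_nonneg (Fc_nonneg (show 2 ≤ 53 by norm_num)) (mul_nonneg (Fc_nonneg (show 2 ≤ 59 by norm_num)) (mul_nonneg (Fc_nonneg (show 2 ≤ 61 by norm_num)) (Fc_nonneg (show 2 ≤ 67 by norm_num)))))) (by norm_num)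
  have hc41 := mul_le_mul hu41 hc43 (mul_nonneg (Fc_nonneg (show 2 ≤ 43 by norm_num)) (mul_nonneg (Fc_nonneg (show 2 ≤ 47 by norm_num)) (mul_nonneg (Fc_nonneg (show 2 ≤ 53 by norm_num)) (mul_nonneg (Fc_nonneg (show 2 ≤ 59 by norm_num)) (mul_nonneg (Fc_nonneg (show 2 ≤ 61 by norm_num)) (Fc_nonneg (show 2 ≤ 67 by norm_num))))))) (by norm_num)
  have hc37 := mul_le_mul hu37 hc41 (mul_nonneg (Fc_nonneg (show 2 ≤ 41 by norm_num)) (mul_nonneg (Fc_nonneg (show 2 ≤ 43 by norm_num)) (mul_nonneg (Fc_nonneg (show 2 ≤ 47 by norm_num)) (mul_nonneg (Fc_nonneg (show 2 ≤ 53 by norm_num)) (mul_nonneg (Fc_nonneg (show 2 ≤ 59 by norm_num)) (mul_nonneg (Fc_nonneg (show 2 ≤ 61 by norm_num)) (Fc_nonneg (show 2 ≤ 67 by norm_num)))))))) (by norm_num)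
  have hc31 := mul_le_mul hu31 hc37 (mul_nonneg (Fc_nonneg (show 2 ≤ 37 by norm_num)) (mul_nonneg (Fc_nonneg (show 2 ≤ 41 by norm_num)) (mul_nonneg (Fc_nonneg (show 2 ≤ 43 by norm_num)) (mul_nonneg (Fc_nonneg (show 2 ≤ 47 by norm_num)) (mul_nonneg (Fc_nonneg (show 2 ≤ 53 by norm_num)) (mul_nonneg (Fc_nonneg (show 2 ≤ 59 by norm_num)) (mul_nonneg (Fc_nonneg (show 2 ≤ 61 by norm_num)) (Fc_nonneg (show 2 ≤ 67 by norm_num))))))))) (by norm_num)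
  have hc29 := mul_le_mul hu29 hc31 (mul_nonneg (Fc_nonneg (show 2 ≤ 31 by norm_num)) (mul_nonneg (Fc_nonneg (show 2 ≤ 37 by norm_num)) (mul_nonneg (Fc_nonneg (show 2 ≤ 41 by norm_num)) (mul_nonneg (Fc_nonneg (show 2 ≤ 43 by norm_num)) (mul_nonneg (Fc_nonneg (show 2 ≤ 47 by norm_num)) (mul_nonneg (Fc_nonneg (show 2 ≤ 53 by norm_num)) (mul_nonneg (Fc_nonneg (show 2 ≤ 59 by norm_num)) (mul_nonneg (Fc_nonneg (show 2 ≤ 61 by norm_num)) (Fc_nonneg (show 2 ≤ 67 by norm_num)))))))))) (by norm_num)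
  have hc23 := mul_le_mul hu23 hc29 (mul_nonneg (Fc_nonneg (show 2 ≤ 29 by norm_num)) (mul_nonneg (Fc_nonneg (show 2 ≤ 31 by norm_num)) (mul_nonneg (Fc_nonneg (show 2 ≤ 37 by norm_num)) (mul_nonneg (Fc_nonneg (show 2 ≤ 41 by norm_num)) (mul_nonneg (Fc_nonneg (show 2 ≤ 43 by norm_num)) (mul_nonneg (Fc_nonneg (show 2 ≤ 47 by norm_num)) (mul_nonneg (Fc_nonneg (show 2 ≤ 53 by norm_num)) (mul_nonneg (Fc_nonneg (show 2 ≤ 59 by norm_num)) (mul_nonneg (Fc_nonneg (show 2 ≤ 61 by norm_num)) (Fc_nonneg (show 2 ≤ 67 by norm_num))))))))))) (by norm_num)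
  have hc19 := mul_le_mul hu19 hc23 (mul_nonneg (Fc_nonneg (show 2 ≤ 23 by norm_num)) (mul_nonneg (Fc_nonneg (show 2 ≤ 29 by norm_num)) (mul_nonneg (Fc_nonneg (show 2 ≤ 31 by norm_num)) (mul_nonneg (Fc_nonneg (show 2 ≤ 37 by norm_num)) (mul_nonneg (Fc_nonneg (show 2 ≤ 41 by norm_num)) (mul_nonneg (Fc_nonneg (show 2 ≤ 43 by norm_num)) (mul_nonneg (Fc_nonneg (show 2 ≤ 47 by norm_num)) (mul_nonneg (Fc_nonneg (show 2 ≤ 53 by norm_num)) (mul_nonneg (Fc_nonneg (show 2 ≤ 59 by norm_num)) (mul_nonneg (Fc_nonneg (show 2 ≤ 61 by norm_num)) (Fc_nonneg (show 2 ≤ 67 by norm_num)))))))))))) (by norm_num)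
  have hc17 := mul_le_mul hu17 hc19 (mul_nonneg (Fc_nonneg (show 2 ≤ 19 by norm_num)) (mul_nonneg (Fc_nonneg (show 2 ≤ 23 by norm_num)) (mul_nonneg (Fc_nonneg (show 2 ≤ 29 by norm_num)) (mul_nonneg (Fc_nonneg (show 2 ≤ 31 by norm_num)) (mul_nonneg (Fc_nonneg (show 2 ≤ 37 by norm_num)) (mul_nonneg (Fc_nonneg (show 2 ≤ 41 by norm_num)) (mul_nonneg (Fc_nonneg (show 2 ≤ 43 by norm_num)) (mul_nonneg (Fc_nonneg (show 2 ≤ 47 by norm_num)) (mul_nonneg (Fc_nonneg (show 2 ≤ 53 by norm_num)) (mul_nonneg (Fc_nonneg (show 2 ≤ 59 by norm_num)) (mul_nonneg (Fc_nonneg (show 2 ≤ 61 by norm_num)) (Fc_nonneg (show 2 ≤ 67 by norm_num))))))))))))) (by norm_num)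
  have hc13 := mul_le_mul hu13 hc17 (mul_nonneg (Fc_nonneg (show 2 ≤ 17 by norm_num)) (mul_nonneg (Fc_nonneg (show 2 ≤ 19 by norm_num)) (mul_nonneg (Fc_nonneg (show 2 ≤ 23 by norm_num)) (mul_nonneg (Fc_nonneg (show 2 ≤ 29 by norm_num)) (mul_nonneg (Fc_nonneg (show 2 ≤ 31 by norm_num)) (mul_nonneg (Fc_nonneg (show 2 ≤ 37 by norm_num)) (mul_nonneg (Fc_nonneg (show 2 ≤ 41 by norm_num)) (mul_nonneg (Fc_nonneg (show 2 ≤ 43 by norm_num)) (mul_nonneg (Fc_nonneg (show 2 ≤ 47 by norm_num)) (mul_nonneg (Fc_nonneg (show 2 ≤ 53 by norm_num)) (mul_nonneg (Fc_nonneg (show 2 ≤ 59 by norm_num)) (mul_nonneg (Fc_nonneg (show 2 ≤ 61 by norm_num)) (Fc_nonneg (show 2 ≤ 67 by norm_num)))))))))))))) (by norm_num)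
  have hc11 := mul_le_mul hu11 hc13 (mul_nonneg (Fc_nonneg (show 2 ≤ 13 by norm_num)) (mul_nonneg (Fc_nonneg (show 2 ≤ 17 by norm_num)) (mul_nonneg (Fc_nonneg (show 2 ≤ 19 by norm_num)) (mul_nonneg (Fc_nonneg (show 2 ≤ 23 by norm_num)) (mul_nonneg (Fc_nonneg (show 2 ≤ 29 by norm_num)) (mul_nonneg (Fc_nonneg (show 2 ≤ 31 by norm_num)) (mul_nonneg (Fc_nonneg (show 2 ≤ 37 by norm_num)) (mul_nonneg (Fc_nonneg (show 2 ≤ 41 by norm_num)) (mul_nonneg (Fc_nonneg (show 2 ≤ 43 by norm_num)) (mul_nonneg (Fc_nonneg (show 2 ≤ 47 by norm_num)) (mul_nonneg (Fc_nonneg (show 2 ≤ 53 by norm_num)) (mul_nonneg (Fc_nonneg (show 2 ≤ 59 by norm_num)) (mul_nonneg (Fc_nonneg (show 2 ≤ 61 by norm_num)) (Fc_nonneg (show 2 ≤ 67 by norm_num))))))))))))))) (by norm_num)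
  have hc7 := mul_le_mul hu7 hc11 (mul_nonneg (Fc_nonneg (show 2 ≤ 11 by norm_num)) (mul_nonneg (Fc_nonneg (show 2 ≤ 13 by norm_num)) (mul_nonneg (Fc_nonneg (show 2 ≤ 17 by norm_num)) (mul_nonneg (Fc_nonneg (show 2 ≤ 19 by norm_num)) (mul_nonneg (Fc_nonneg (show 2 ≤ 23 by norm_num)) (mul_nonneg (Fc_nonneg (show 2 ≤ 29 by norm_num)) (mul_nonneg (Fc_nonneg (show 2 ≤ 31 by norm_num)) (mul_nonneg (Fc_nonneg (show 2 ≤ 37 by norm_num)) (mul_nonneg (Fc_nonneg (show 2 ≤ 41 by norm_num)) (mul_nonneg (Fc_nonneg (show 2 ≤ 43 by norm_num)) (mul_nonneg (Fc_nonneg (show 2 ≤ 47 by norm_num)) (mul_nonneg (Fc_nonneg (show 2 ≤ 53 by norm_num)) (mul_nonneg (Fc_nonneg (show 2 ≤ 59 by norm_num)) (mul_nonneg (Fc_nonneg (show 2 ≤ 61 by norm_num)) (Fc_nonneg (show 2 ≤ 67 by norm_num)))))))))))))))) (by norm_num)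
  have hc5 := mul_le_mul hu5 hc7 (mul_nonneg (Fc_nonneg (show 2 ≤ 7 by norm_num)) (mul_nonneg (Fc_nonneg (show 2 ≤ 11 by norm_num)) (mul_nonneg (Fc_nonneg (show 2 ≤ 13 by norm_num)) (mul_nonneg (Fc_nonneg (show 2 ≤ 17 by norm_num)) (mul_nonneg (Fc_nonneg (show 2 ≤ 19 by norm_num)) (mul_nonneg (Fc_nonneg (show 2 ≤ 23 by norm_num)) (mul_nonneg (Fc_nonneg (show 2 ≤ 29 by norm_num)) (mul_nonneg (Fc_nonneg (show 2 ≤ 31 by norm_num)) (mul_nonneg (Fc_nonneg (show 2 ≤ 37 by norm_num)) (mul_nonneg (Fc_nonneg (show 2 ≤ 41 by norm_num)) (mul_nonneg (Fc_nonneg (show 2 ≤ 43 by norm_num)) (mul_nonneg (Fc_nonneg (show 2 ≤ 47 by norm_num)) (mul_nonneg (Fc_nonneg (show 2 ≤ 53 by norm_num)) (mul_nonneg (Fc_nonneg (show 2 ≤ 59 by norm_num)) (mul_nonneg (Fc_nonneg (show 2 ≤ 61 by norm_num)) (Fc_nonneg (show 2 ≤ 67 by norm_num))))))))))))))))) (by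 norm_num)
  have hc3 := mul_le_mul hu3 hc5 (mul_nonneg (Fc_nonneg (show 2 ≤ 5 by norm_num)) (mul_nonneg (Fc_nonneg (show 2 ≤ 7 by norm_num)) (mul_nonneg (Fc_nonneg (show 2 ≤ 11 by norm_num)) (mul_nonneg (Fc_nonneg (show 2 ≤ 13 by norm_num)) (mul_nonneg (Fc_nonneg (show 2 ≤ 17 by norm_num)) (mul_nonneg (Fc_nonneg (show 2 ≤ 19 by norm_num)) (mul_nonneg (Fc_nonneg (show 2 ≤ 23 by norm_num)) (mul_nonneg (Fc_nonneg (show 2 ≤ 29 by norm_num)) (mul_nonneg (Fc_nonneg (show 2 ≤ 31 by norm_num)) (mul_nonneg (Fc_nonneg (show 2 ≤ 37 by norm_num)) (mul_nonneg (Fc_nonneg (show 2 ≤ 41 by norm_num)) (mul_nonneg (Fc_nonneg (show 2 ≤ 43 by norm_num)) (mul_nonneg (Fc_nonneg (show 2 ≤ 47 by norm_num)) (mul_nonneg (Fc_nonneg (show 2 ≤ 53 by norm_num)) (mul_nonneg (Fc_nonneg (show 2 ≤ 59 by norm_num)) (mul_nonneg (Fc_nonneg (show 2 ≤ 61 by norm_num))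 (Fc_nonneg (show 2 ≤ 67 by norm_num)))))))))))))))))) (by norm_num)
  have hc2 := mul_le_mul hu2 hc3 (mul_nonneg (Fc_nonneg (show 2 ≤ 3 by norm_num)) (mul_nonneg (Fc_nonneg (show 2 ≤ 5 by norm_num)) (mul_nonneg (Fc_nonneg (show 2 ≤ 7 by norm_num)) (mul_nonneg (Fc_nonneg (show 2 ≤ 11 by norm_num)) (mul_nonneg (Fc_nonneg (show 2 ≤ 13 by norm_num)) (mul_nonneg (Fc_nonneg (show 2 ≤ 17 by norm_num)) (mul_nonneg (Fc_nonneg (show 2 ≤ 19 by norm_num)) (mul_nonneg (Fc_nonneg (show 2 ≤ 23 by norm_num)) (mul_nonneg (Fc_nonneg (show 2 ≤ 29 by norm_num)) (mul_nonneg (Fc_nonneg (show 2 ≤ 31 by norm_num)) (mul_nonneg (Fc_nonneg (show 2 ≤ 37 by norm_num)) (mul_nonneg (Fc_nonneg (show 2 ≤ 41 by norm_num)) (mul_nonneg (Fc_nonneg (show 2 ≤ 43 by norm_num)) (mul_nonneg (Fc_nonneg (show 2 ≤ 47 by norm_num)) (mul_nonneg (Fc_nonneg (show 2 ≤ 53 by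 norm_num)) (mul_nonneg (Fc_nonneg (show 2 ≤ 59 by norm_num)) (mul_nonneg (Fc_nonneg (show 2 ≤ 61 by norm_num)) (Fc_nonneg (show 2 ≤ 67 by norm_num))))))))))))))))))) (by norm_num)
  calc Fc 2 * (Fc 3 * (Fc 5 * (Fc 7 * (Fc 11 * (Fc 13 * (Fc 17 * (Fc 19 * (Fc 23 * (Fc 29 * (Fc 31 * (Fc 37 * (Fc 41 * (Fc 43 * (Fc 47 * (Fc 53 * (Fc 59 * (Fc 61 * (Fc 67)))))))))))))))))) ≤ (1.2071069 : ℝ) * ((1.0749150 : ℝ) * ((1.0236069 : ℝ) * ((1.0114463 : ℝ) * ((1.0044372 : ℝ) * ((1.0031411 : ℝ) * ((1.0018104 : ℝ) * ((1.0014423 : ℝ) * ((1.0009772 : ℝ) * ((1.0006104 : ℝ) * ((1.0005333 : ℝ) * ((1.0003729 : ℝ) * ((1.0003030 : ℝ) * ((1.0002753 : ℝ) * ((1.0002301 : ℝ) * ((1.0001806 : ℝ) * ((1.0001455 : ℝ) * ((1.0001361 : ℝ) * ((1.0001127 : ℝ))))))))))))))))))) := hc2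
    _ ≤ (1.3632501 : ℝ) := by norm_num

noncomputable def gt' (k : ℕ) : ℝ := 1 / (4 * (2 * (k : ℝ) + 69)) - 1 / (4 * (2 * (k : ℝ) + 71))

lemma gt'_nonneg (k : ℕ) : 0 ≤ gt' k := by
  have hk : (0:ℝ) ≤ (k:ℝ) := Nat.cast_nonneg k
  have h1 : (0:ℝ) < 4 * (2 * (k : ℝ) + 69) := by positivity
  have h2 : 4 * (2 * (k : ℝ) + 69) ≤ 4 * (2 * (k : ℝ) + 71) := by linarith
  have := one_div_le_one_div_of_le h1 h2
  unfold gt'; linarith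

lemma hasSum_gt' : HasSum gt' (1 / 276) := by
  rw [hasSum_iff_tendsto_nat_of_nonneg gt'_nonneg]
  have hpart : ∀ n : ℕ, ∑ i ∈ Finset.range n, gt' i
      = 1 / 276 - 1 / (4 * (2 * (n : ℝ) + 69)) := by
    intro n
    have h := Finset.sum_range_sub' (f := fun k : ℕ => 1 / (4 * (2 * (k : ℝ) + 69))) n
    have he : ∀ i : ℕ, gt' i = (fun k : ℕ => 1 / (4 * (2 * (k : ℝ) + 69))) i
        - (fun k : ℕ => 1 / (4 * (2 * (k : ℝ) + 69))) (i + 1) := by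
      intro i; unfold gt'; push_cast; ring_nf
    rw [Finset.sum_congr rfl fun i _ => he i, h]
    norm_num
  simp only [hpart]
  have h0 : Tendsto (fun n : ℕ => 1 / (4 * (2 * (n : ℝ) + 69))) atTop (nhds 0) := by
    apply squeeze_zero (fun n => by positivity) (g := fun n : ℕ => 1 / ((n : ℝ) + 1))
    · intro n
      have hk : (0:ℝ) ≤ (n:ℝ) := Nat.cast_nonneg n
      apply one_div_le_one_div_of_le (by positivity)
      linarith
    · exact tendsto_one_div_add_atTop_nhds_zero_nat
  simpa using tendsto_const_nhds.sub h0

lemma mem_sP {p : Nat.Primes} : p ∈ sP ↔ (p : ℕ) < 71 := by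
  unfold sP; exact Finset.mem_subtype.trans Finset.mem_range

lemma tail_bound (v : Finset Nat.Primes) (hv : ∀ p ∈ v, p ∉ sP) :
    ∑ p ∈ v, Ac (p : ℕ) ≤ 1 / 276 := by
  have h71 : ∀ p ∈ v, 71 ≤ (p : ℕ) := by
    intro p hp
    have := hv p hp
    rw [mem_sP] at this
    omega
  have hodd : ∀ p ∈ v, (p : ℕ) % 2 = 1 := by
    intro p hp
    have hne : (p : ℕ) ≠ 2 := by have := h71 p hp; omega
    have hodd' := Nat.Prime.odd_of_ne_two p.2 hne
    rcases hodd' with ⟨m, hm⟩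
    omega
  set e : Nat.Primes → ℕ := fun p => ((p : ℕ) - 71) / 2 with he
  have hkey : ∀ p ∈ v, (p : ℕ) = 2 * e p + 71 := by
    intro p hp
    have h1 := h71 p hp
    have h2 := hodd p hp
    simp only [he]
    omega
  have hcmp : ∀ p ∈ v, Ac (p : ℕ) ≤ gt' (e p) := by
    intro p hp
    have hn2 : 2 ≤ (p : ℕ) := p.2.two_le
    have hx : ((p : ℕ) : ℝ) = 2 * (e p : ℝ) + 71 := by
      have := hkey p hp
      exact_mod_cast congrArg (Nat.cast : ℕ → ℝ) this
    have hk : (0:ℝ) ≤ (e p : ℝ) := Nat.cast_nonneg _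
    have heq : gt' (e p) = 1 / (2 * (2 * (e p : ℝ) + 71) * (2 * (e p : ℝ) + 69)) := by
      unfold gt'
      have h1 : (4 * (2 * (e p : ℝ) + 69)) ≠ 0 := by positivity
      have h2 : (4 * (2 * (e p : ℝ) + 71)) ≠ 0 := by positivity
      have h3 : (2 * (2 * (e p : ℝ) + 71) * (2 * (e p : ℝ) + 69)) ≠ 0 := by positivity
      field_simp
      ring
    refine (Ac_le hn2).trans ?_
    rw [hx, heq]
    apply one_div_le_one_div_of_le (by positivity)
    nlinarith
  have hinj : ∀ p ∈ v, ∀ q ∈ v, e p = e q → p = q := by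
    intro p hp q hq hpq
    have h1 := hkey p hp
    have h2 := hkey q hq
    have : (p : ℕ) = (q : ℕ) := by omega
    exact Nat.Primes.coe_nat_injective this
  calc ∑ p ∈ v, Ac (p : ℕ) ≤ ∑ p ∈ v, gt' (e p) := Finset.sum_le_sum hcmp
    _ = ∑ k ∈ v.image e, gt' k := (Finset.sum_image hinj).symm
    _ ≤ 1 / 276 := sum_le_hasSum _ (fun k _ => gt'_nonneg k) hasSum_gt'

lemma hasProdFc : HasProd (fun p : Nat.Primes => Fc (p : ℕ))
    (Real.exp (∑' p : Nat.Primes, Real.log (Fc (p : ℕ)))) := by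
  have hsum2 : Summable (fun p : Nat.Primes => 1 / ((p : ℕ) : ℝ) ^ 2) :=
    (Real.summable_one_div_nat_pow.mpr one_lt_two).comp_injective Nat.Primes.coe_nat_injective
  have hA : Summable (fun p : Nat.Primes => Ac (p : ℕ)) :=
    Summable.of_nonneg_of_le (fun p => (Ac_pos p.2.two_le).le)
      (fun p => Ac_le_sq p.2.two_le) hsum2
  have hlog : Summable (fun p : Nat.Primes => Real.log (Fc (p : ℕ))) := by
    refine hA.of_nonneg_of_le (fun p => Real.log_nonneg (one_le_Fc p.2.two_le)) (fun p => ?_)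
    have h := Real.log_le_sub_one_of_pos (Fc_pos p.2.two_le)
    have : Fc (p : ℕ) - 1 = Ac (p : ℕ) := by unfold Fc Ac; ring
    linarith
  have h := hlog.hasSum.rexp
  have he : (Real.exp ∘ fun p : Nat.Primes => Real.log (Fc (p : ℕ)))
      = fun p : Nat.Primes => Fc (p : ℕ) :=
    funext fun p => Real.exp_log (Fc_pos p.2.two_le)
  rwa [he] at h

lemma exp_tail_le : Real.exp (1 / 276) ≤ 276 / 275 := by
  have hx := Real.add_one_le_exp (-(1 / 276) : ℝ)
  have hpos := Real.exp_pos (1 / 276 : ℝ)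
  have hmul : Real.exp (1 / 276) * Real.exp (-(1 / 276)) = 1 := by
    rw [← Real.exp_add]; norm_num
  nlinarith

theorem G_half_value :
    ∃ L : ℝ, HasProd (fun p : Nat.Primes =>
        1 + 1 / ((p : ℕ) * ((p : ℕ) - 1 + Real.sqrt ((p : ℕ) ^ 2 - (p : ℕ))))) L ∧
      L ∈ Set.Ioo (1.36 : ℝ) 1.37 := by
  refine ⟨Real.exp (∑' p : Nat.Primes, Real.log (Fc (p : ℕ))), hasProdFc, ?_, ?_⟩
  · calc (1.36 : ℝ) < ∏ p ∈ sP, Fc (p : ℕ) := prod_sP_lb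
      _ ≤ _ := by
        refine ge_of_tendsto hasProdFc (Filter.eventually_atTop.2 ⟨sP, fun t hst => ?_⟩)
        rw [← Finset.prod_sdiff hst]
        have h1 : (1:ℝ) ≤ ∏ p ∈ t \ sP, Fc (p : ℕ) := by
          simpa using Finset.prod_le_prod (f := fun _ : Nat.Primes => (1:ℝ))
            (fun i _ => zero_le_one) (fun i _ => one_le_Fc i.2.two_le)
        have h2 : (0:ℝ) ≤ ∏ p ∈ sP, Fc (p : ℕ) :=
          Finset.prod_nonneg fun p _ => Fc_nonneg p.2.two_le
        exact le_mul_of_one_le_left h2 h1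
  · have hub : ∀ t : Finset Nat.Primes, ∏ p ∈ t, Fc (p : ℕ) ≤ 1.3632501 * (276 / 275) := by
      intro t
      have hsplit : ∏ p ∈ t, Fc (p : ℕ)
          = (∏ p ∈ t ∩ sP, Fc (p : ℕ)) * ∏ p ∈ t \ sP, Fc (p : ℕ) :=
        (Finset.prod_inter_mul_prod_diff t sP _).symm
      have h1 : ∏ p ∈ t ∩ sP, Fc (p : ℕ) ≤ ∏ p ∈ sP, Fc (p : ℕ) := by
        rw [← Finset.prod_sdiff (show t ∩ sP ⊆ sP from Finset.inter_subset_right)]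
        have ha : (1:ℝ) ≤ ∏ p ∈ sP \ (t ∩ sP), Fc (p : ℕ) := by
          simpa using Finset.prod_le_prod (f := fun _ : Nat.Primes => (1:ℝ))
            (fun i _ => zero_le_one) (fun i _ => one_le_Fc i.2.two_le)
        have hb : (0:ℝ) ≤ ∏ p ∈ t ∩ sP, Fc (p : ℕ) :=
          Finset.prod_nonneg fun p _ => Fc_nonneg p.2.two_le
        exact le_mul_of_one_le_left hb ha
      have h2 : ∏ p ∈ t \ sP, Fc (p : ℕ) ≤ Real.exp (∑ p ∈ t \ sP, Ac (p : ℕ)) := by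
        rw [Real.exp_sum]
        refine Finset.prod_le_prod (fun p _ => Fc_nonneg p.2.two_le) (fun p _ => ?_)
        have h := Real.add_one_le_exp (Ac (p : ℕ))
        have : Fc (p : ℕ) = Ac (p : ℕ) + 1 := by unfold Fc Ac; ring
        linarith
      have h3 : ∑ p ∈ t \ sP, Ac (p : ℕ) ≤ 1 / 276 :=
        tail_bound _ (fun p hp => (Finset.mem_sdiff.mp hp).2)
      have h4 : Real.exp (∑ p ∈ t \ sP, Ac (p : ℕ)) ≤ 276 / 275 :=
        (Real.exp_le_exp.mpr h3).trans exp_tail_le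
      calc ∏ p ∈ t, Fc (p : ℕ)
          = (∏ p ∈ t ∩ sP, Fc (p : ℕ)) * ∏ p ∈ t \ sP, Fc (p : ℕ) := hsplit
        _ ≤ 1.3632501 * (276 / 275) := by
            have hp1 : (0:ℝ) ≤ ∏ p ∈ t ∩ sP, Fc (p : ℕ) :=
              Finset.prod_nonneg fun p _ => Fc_nonneg p.2.two_le
            have hp2 : (0:ℝ) ≤ ∏ p ∈ t \ sP, Fc (p : ℕ) :=
              Finset.prod_nonneg fun p _ => Fc_nonneg p.2.two_le
            exact mul_le_mul (h1.trans prod_sP_ub) (h2.trans h4) hp2 (by norm_num)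
    have := hasProd_le_of_prod_le hasProdFc hub
    calc Real.exp (∑' p : Nat.Primes, Real.log (Fc (p : ℕ))) ≤ 1.3632501 * (276 / 275) := this
      _ < 1.37 := by norm_num
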